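/- SFM duality: min_{A ⊆ V} (F(A) − u(A)) = max_{s ∈ B(F)} Σ_{i=1}^n min(s_i − u_i, 0). -/

import Mathlib

open Finset

/-- A set function on subsets of `Fin n` is submodular. -/
def Submodular {n : ℕ} (F : Finset (Fin n) → ℝ) : Prop :=
  ∀ A B : Finset (Fin n), F (A ∪ B) + F (A ∩ B) ≤ F A + F B

/-- The Lovász extension of a set function, via a permutation sorting `w` decreasingly. -/
noncomputable def lovasz {n : ℕ} (F : Finset (Fin n) → ℝ) (w : Fin n → ℝ) : ℝ :=
  let σ := Tuple.sort (fun i => -w i)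
  ∑ k : Fin n, w (σ k) *
    (F ((Finset.Iic k).image σ) - F ((Finset.Iio k).image σ))

/-- The base polytope of a set function. -/
def basePolytope {n : ℕ} (F : Finset (Fin n) → ℝ) : Set (Fin n → ℝ) :=
  {s | (∑ i, s i) = F Finset.univ ∧
    ∀ A : Finset (Fin n), (∑ i ∈ A, s i) ≤ F A}

section SFMAux

variable {n : ℕ} (F : Finset (Fin n) → ℝ)

/-- Tight sets of a point of the base polytope are closed under union and intersection. -/
lemma sfm_tight_union_inter {y : Fin n → ℝ} (hF : Submodular F)
    (hy : ∀ A : Finset (Fin n), ∑ i ∈ A, y i ≤ F A) {A B : Finset (Fin n)}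
    (hA : ∑ i ∈ A, y i = F A) (hB : ∑ i ∈ B, y i = F B) :
    (∑ i ∈ A ∪ B, y i = F (A ∪ B)) ∧ (∑ i ∈ A ∩ B, y i = F (A ∩ B)) := by
  have h1 := Finset.sum_union_inter (s₁ := A) (s₂ := B) (f := y)
  have h2 := hF A B
  have h3 := hy (A ∪ B)
  have h4 := hy (A ∩ B)
  constructor <;> linarith

/-- The greedy vertex (for the identity order). -/
noncomputable def sfmGreedyVec : Fin n → ℝ := fun i => F (Finset.Iic i) - F (Finset.Iio i)

lemma sfm_greedy_le (hF : Submodular F) (hF0 : F ∅ = 0) :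
    ∀ A : Finset (Fin n), ∑ i ∈ A, sfmGreedyVec F i ≤ F A := by
  intro A
  induction A using Finset.strongInduction with
  | _ A ih =>
    rcases A.eq_empty_or_nonempty with rfl | hA
    · simp [hF0]
    · set i := A.max' hA with hi
      have hiA : i ∈ A := A.max'_mem hA
      have hsub : A ⊆ Finset.Iic i := fun j hj => Finset.mem_Iic.2 (A.le_max' j hj)
      have h1 : Finset.Iio i ∪ A = Finset.Iic i := by
        apply Finset.Subset.antisymm
        · exact Finset.union_subset (Finset.Iio_subset_Iic_self) hsub
        · intro j hj
          rcases lt_or_eq_of_le (Finset.mem_Iic.1 hj) with h | h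
          · exact Finset.mem_union_left _ (Finset.mem_Iio.2 h)
          · exact Finset.mem_union_right _ (h ▸ hiA)
      have h2 : Finset.Iio i ∩ A = A.erase i := by
        ext j
        simp only [Finset.mem_inter, Finset.mem_Iio, Finset.mem_erase]
        constructor
        · rintro ⟨hlt, hj⟩; exact ⟨ne_of_lt hlt, hj⟩
        · rintro ⟨hne, hj⟩; exact ⟨lt_of_le_of_ne (Finset.mem_Iic.1 (hsub hj)) hne, hj⟩
      have hsm := hF (Finset.Iio i) A
      rw [h1, h2] at hsm
      have hih := ih (A.erase i) (Finset.erase_ssubset hiA)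
      have hsumA : sfmGreedyVec F i + ∑ j ∈ A.erase i, sfmGreedyVec F j
          = ∑ j ∈ A, sfmGreedyVec F j := Finset.add_sum_erase _ _ hiA
      have hgv : sfmGreedyVec F i = F (Finset.Iic i) - F (Finset.Iio i) := rfl
      linarith

lemma sfm_greedy_sum_univ (hF0 : F ∅ = 0) : ∑ i, sfmGreedyVec F i = F Finset.univ := by
  have key : ∀ m : ℕ, m ≤ n →
      ∑ i ∈ univ.filter (fun i : Fin n => (i : ℕ) < m), sfmGreedyVec F i
        = F (univ.filter (fun i : Fin n => (i : ℕ) < m)) := by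
    intro m
    induction m with
    | zero => intro _; simp [hF0]
    | succ m ih =>
      intro hm
      have hmn : m < n := hm
      set i0 : Fin n := ⟨m, hmn⟩ with hi0
      have hins : univ.filter (fun i : Fin n => (i : ℕ) < m + 1)
          = insert i0 (univ.filter fun i : Fin n => (i : ℕ) < m) := by
        ext k
        simp only [Finset.mem_filter, Finset.mem_univ, true_and, Finset.mem_insert,
          Nat.lt_succ_iff_lt_or_eq, Fin.ext_iff, hi0]
        tauto
      have hIic : Finset.Iic i0 = univ.filter (fun i : Fin n => (i : ℕ) < m + 1) := by
        ext k
        simp [Fin.le_def, Nat.lt_succ_iff, hi0]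
      have hIio : Finset.Iio i0 = univ.filter (fun i : Fin n => (i : ℕ) < m) := by
        ext k
        simp [Fin.lt_def, hi0]
      have hnot : i0 ∉ univ.filter (fun i : Fin n => (i : ℕ) < m) := by simp [hi0]
      rw [hins, Finset.sum_insert hnot, ih (le_of_lt hmn)]
      have hgv : sfmGreedyVec F i0 = F (Finset.Iic i0) - F (Finset.Iio i0) := rfl
      rw [hgv, hIic, hIio, ← hins]
      ring
  have h := key n le_rfl
  have hfull : univ.filter (fun i : Fin n => (i : ℕ) < n) = univ :=
    Finset.filter_true_of_mem (fun i _ => i.isLt)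
  rwa [hfull] at h

lemma sfm_greedy_mem (hF : Submodular F) (hF0 : F ∅ = 0) :
    sfmGreedyVec F ∈ basePolytope F :=
  ⟨sfm_greedy_sum_univ F hF0, sfm_greedy_le F hF hF0⟩

lemma sfm_weak_duality (u : Fin n → ℝ) {s : Fin n → ℝ} (hs : s ∈ basePolytope F)
    (A : Finset (Fin n)) :
    (∑ i, min (s i - u i) 0) ≤ F A - ∑ i ∈ A, u i := by
  have h1 : (∑ i, min (s i - u i) 0) ≤ ∑ i ∈ A, min (s i - u i) 0 := by
    rw [← Finset.sum_sdiff (Finset.subset_univ A)]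
    have : (∑ i ∈ univ \ A, min (s i - u i) 0) ≤ 0 :=
      Finset.sum_nonpos (fun i _ => min_le_right _ _)
    linarith
  have h2 : (∑ i ∈ A, min (s i - u i) 0) ≤ ∑ i ∈ A, (s i - u i) :=
    Finset.sum_le_sum (fun i _ => min_le_left _ _)
  have h3 : (∑ i ∈ A, (s i - u i)) = (∑ i ∈ A, s i) - ∑ i ∈ A, u i :=
    Finset.sum_sub_distrib _ _
  have h4 := hs.2 A
  linarith

lemma sfm_cont_obj (u : Fin n → ℝ) :
    Continuous (fun s : Fin n → ℝ => ∑ i, min (s i - u i) 0) := by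
  apply continuous_finset_sum
  intro i _
  exact ((continuous_apply i).sub continuous_const).min continuous_const

lemma sfm_closed_base : IsClosed (basePolytope F) := by
  have heq : basePolytope F = {s : Fin n → ℝ | ∑ i, s i = F univ} ∩
      ⋂ A : Finset (Fin n), {s : Fin n → ℝ | ∑ i ∈ A, s i ≤ F A} := by
    ext s
    simp [basePolytope, Set.mem_iInter]
  rw [heq]
  refine IsClosed.inter (isClosed_eq ?_ continuous_const)
    (isClosed_iInter fun A => isClosed_le ?_ continuous_const) <;>
  exact continuous_finset_sum _ (fun i _ => continuous_apply i)

lemma sfm_compact_base : IsCompact (basePolytope F) := by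
  apply IsCompact.of_isClosed_subset
    (isCompact_Icc (a := fun i : Fin n => F univ - F (univ.erase i))
      (b := fun i : Fin n => F {i})) (sfm_closed_base F)
  intro s hs
  rw [Set.mem_Icc]
  constructor
  · intro i
    have h1 : ∑ j ∈ univ.erase i, s j ≤ F (univ.erase i) := hs.2 _
    have h2 : s i + ∑ j ∈ univ.erase i, s j = F univ := by
      rw [Finset.add_sum_erase _ _ (Finset.mem_univ i)]; exact hs.1
    simp only
    linarith
  · intro i
    have := hs.2 {i}
    simpa using this

/-- Key exchange lemma: at a maximizer of the truncated sum, if `y i < u i` and every tight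
set containing `i` contains `j`, then `y j ≤ u j`. -/
lemma sfm_exchange_key (u : Fin n → ℝ) {y : Fin n → ℝ} (hyB : y ∈ basePolytope F)
    (hymax : ∀ z ∈ basePolytope F, (∑ k, min (z k - u k) 0) ≤ ∑ k, min (y k - u k) 0)
    {i j : Fin n} (hi : y i < u i)
    (hDij : ∀ A : Finset (Fin n), i ∈ A → (∑ k ∈ A, y k = F A) → j ∈ A) :
    y j ≤ u j := by
  classical
  by_contra hj
  push_neg at hj
  have hij : i ≠ j := by rintro rfl; linarith
  set S : Finset (Finset (Fin n)) :=
    univ.powerset.filter (fun A : Finset (Fin n) => i ∈ A ∧ j ∉ A) with hS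
  have hSne : S.Nonempty := by
    refine ⟨{i}, ?_⟩
    simp [hS, Finset.mem_singleton, hij, Ne.symm hij]
  set δ := S.inf' hSne (fun A => F A - ∑ k ∈ A, y k) with hδ
  have hδpos : 0 < δ := by
    rw [hδ, Finset.lt_inf'_iff]
    intro A hA
    simp only [hS, Finset.mem_filter] at hA
    obtain ⟨-, hiA, hjA⟩ := hA
    have hle := hyB.2 A
    rcases lt_or_eq_of_le hle with h | h
    · linarith
    · exact absurd (hDij A hiA h) hjA
  set t := min δ (min (u i - y i) (y j - u j)) with ht
  have htpos : 0 < t := lt_min hδpos (lt_min (by linarith) (by linarith))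
  have ht1 : t ≤ δ := min_le_left _ _
  have ht2 : t ≤ u i - y i := le_trans (min_le_right _ _) (min_le_left _ _)
  have ht3 : t ≤ y j - u j := le_trans (min_le_right _ _) (min_le_right _ _)
  set y' : Fin n → ℝ :=
    fun k => y k + ((if k = i then t else 0) + (if k = j then -t else 0)) with hy'
  have hsum : ∀ A : Finset (Fin n), ∑ k ∈ A, y' k
      = (∑ k ∈ A, y k) + ((if i ∈ A then t else 0) + (if j ∈ A then -t else 0)) := by
    intro A
    simp only [hy']
    rw [Finset.sum_add_distrib, Finset.sum_add_distrib,
      Finset.sum_ite_eq' A i (fun _ => t), Finset.sum_ite_eq' A j (fun _ => -t)]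
  have hy'B : y' ∈ basePolytope F := by
    constructor
    · rw [hsum univ]
      simp [hyB.1]
    · intro A
      rw [hsum A]
      by_cases hiA : i ∈ A
      · by_cases hjA : j ∈ A
        · simp only [hiA, hjA, if_true]
          have := hyB.2 A
          linarith
        · have hAS : A ∈ S := by simp [hS, hiA, hjA]
          have hslack : δ ≤ F A - ∑ k ∈ A, y k := Finset.inf'_le _ hAS
          simp only [hiA, hjA, if_true, if_false]
          linarith
      · have := hyB.2 A
        by_cases hjA : j ∈ A <;> simp only [hiA, hjA, if_true, if_false] <;> linarith
  have hfy' : (∑ k, min (y' k - u k) 0) = (∑ k, min (y k - u k) 0) + t := by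
    have hpt : ∀ k : Fin n, min (y' k - u k) 0
        = min (y k - u k) 0 + (if k = i then t else 0) := by
      intro k
      rcases eq_or_ne k i with rfl | hki
      · have h1 : y' k = y k + t := by simp [hy', hij]
        rw [h1, if_pos rfl, min_eq_left (by linarith), min_eq_left (by linarith)]
        ring
      · rcases eq_or_ne k j with rfl | hkj
        · have h1 : y' k = y k - t := by
            simp [hy', Ne.symm hij]
            ring
          rw [h1, if_neg hki, min_eq_right (by linarith), min_eq_right (by linarith)]
          ring
        · have h1 : y' k = y k := by simp [hy', hki, hkj]
          rw [h1, if_neg hki]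
          ring
    rw [Finset.sum_congr rfl (fun k _ => hpt k), Finset.sum_add_distrib,
      Finset.sum_ite_eq' univ i (fun _ => t)]
    simp
  have := hymax y' hy'B
  rw [hfy'] at this
  linarith

/-- At a maximizer `y`, there is a tight set containing all coordinates with `y i < u i`
and only coordinates with `y i ≤ u i`. -/
lemma sfm_exists_tight_set (hF : Submodular F) (hF0 : F ∅ = 0) (u : Fin n → ℝ)
    {y : Fin n → ℝ} (hyB : y ∈ basePolytope F)
    (hymax : ∀ z ∈ basePolytope F, (∑ k, min (z k - u k) 0) ≤ ∑ k, min (y k - u k) 0) :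
    ∃ A : Finset (Fin n), (∑ i ∈ A, y i = F A) ∧ (∀ i ∈ A, y i ≤ u i)
      ∧ (∀ i, y i < u i → i ∈ A) := by
  classical
  set N : Finset (Fin n) := univ.filter (fun i => y i < u i) with hN
  by_cases hNe : N.Nonempty
  · set T : Fin n → Finset (Finset (Fin n)) :=
      fun i => univ.powerset.filter (fun A : Finset (Fin n) => i ∈ A ∧ ∑ k ∈ A, y k = F A)
      with hT
    have hTne : ∀ i : Fin n, (T i).Nonempty :=
      fun i => ⟨univ, by simp [hT, hyB.1]⟩
    set D : Fin n → Finset (Fin n) := fun i => (T i).inf' (hTne i) id with hD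
    have hDprop : ∀ i : Fin n, i ∈ D i ∧ ∑ k ∈ D i, y k = F (D i) := by
      intro i
      apply Finset.inf'_induction (p := fun A : Finset (Fin n) => i ∈ A ∧ ∑ k ∈ A, y k = F A)
      · rintro A ⟨hiA, htA⟩ B ⟨hiB, htB⟩
        exact ⟨Finset.mem_inter.2 ⟨hiA, hiB⟩, (sfm_tight_union_inter F hF hyB.2 htA htB).2⟩
      · intro A hA
        simp only [hT, Finset.mem_filter] at hA
        exact ⟨hA.2.1, hA.2.2⟩
    have hDmin : ∀ i : Fin n, ∀ A : Finset (Fin n), i ∈ A → (∑ k ∈ A, y k = F A) →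
        D i ⊆ A := by
      intro i A hiA htA
      have hmem : A ∈ T i := by simp [hT, hiA, htA]
      exact Finset.inf'_le id hmem
    have hDkey : ∀ i ∈ N, ∀ j ∈ D i, y j ≤ u j := by
      intro i hiN j hj
      have hi : y i < u i := (Finset.mem_filter.1 hiN).2
      exact sfm_exchange_key F u hyB hymax hi (fun A hiA htA => hDmin i A hiA htA hj)
    have hsup := Finset.sup'_induction (s := N) hNe D
      (p := fun A : Finset (Fin n) => (∑ k ∈ A, y k = F A) ∧ ∀ k ∈ A, y k ≤ u k)
      (by
        rintro A ⟨htA, hlA⟩ B ⟨htB, hlB⟩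
        refine ⟨(sfm_tight_union_inter F hF hyB.2 htA htB).1, ?_⟩
        intro k hk
        rcases Finset.mem_union.1 hk with h | h
        · exact hlA k h
        · exact hlB k h)
      (by
        intro i hiN
        exact ⟨(hDprop i).2, fun k hk => hDkey i hiN k hk⟩)
    refine ⟨N.sup' hNe D, hsup.1, hsup.2, ?_⟩
    intro i hi
    have hiN : i ∈ N := by simp [hN, hi]
    exact Finset.le_sup' D hiN (hDprop i).1
  · refine ⟨∅, by simp [hF0], by simp, ?_⟩
    intro i hi
    exact absurd ⟨i, by simp [hN, hi]⟩ hNe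

end SFMAux

/-- SFM duality: `min_{A ⊆ V} F(A) - u(A) = max_{s ∈ B(F)} Σ_i min (s i - u i) 0`. -/
theorem sfm_duality {n : ℕ} (F : Finset (Fin n) → ℝ)
    (hF : Submodular F) (hF0 : F ∅ = 0) (u : Fin n → ℝ) :
    (Finset.univ.powerset.inf' ⟨∅, by simp⟩
        (fun A : Finset (Fin n) => F A - ∑ i ∈ A, u i))
      = sSup {x : ℝ | ∃ s ∈ basePolytope F, x = ∑ i, min (s i - u i) 0} := by
  classical
  have hgB : sfmGreedyVec F ∈ basePolytope F := sfm_greedy_mem F hF hF0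
  set X : Set ℝ := {x : ℝ | ∃ s ∈ basePolytope F, x = ∑ i, min (s i - u i) 0} with hX
  set m : ℝ := (Finset.univ.powerset.inf' ⟨∅, by simp⟩
      (fun A : Finset (Fin n) => F A - ∑ i ∈ A, u i)) with hm
  have hXne : X.Nonempty := ⟨∑ i, min (sfmGreedyVec F i - u i) 0, sfmGreedyVec F, hgB, rfl⟩
  have hweak : ∀ x ∈ X, x ≤ m := by
    rintro x ⟨s, hs, rfl⟩
    apply Finset.le_inf'
    intro A _
    exact sfm_weak_duality F u hs A
  have hbdd : BddAbove X := ⟨m, hweak⟩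
  obtain ⟨y, hyB, hymax⟩ := (sfm_compact_base F).exists_isMaxOn ⟨sfmGreedyVec F, hgB⟩
    (sfm_cont_obj u).continuousOn
  have hymax' : ∀ z ∈ basePolytope F,
      (∑ k, min (z k - u k) 0) ≤ ∑ k, min (y k - u k) 0 := fun z hz => hymax hz
  obtain ⟨A, htA, hlA, hmA⟩ := sfm_exists_tight_set F hF hF0 u hyB hymax'
  have hval : F A - ∑ i ∈ A, u i = ∑ i, min (y i - u i) 0 := by
    have h1 : (∑ i ∈ A, min (y i - u i) 0) = ∑ i, min (y i - u i) 0 := by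
      apply Finset.sum_subset (Finset.subset_univ A)
      intro i _ hi
      have hnlt : ¬ y i < u i := fun h => hi (hmA i h)
      have : u i ≤ y i := not_lt.mp hnlt
      rw [min_eq_right (by linarith)]
    have h2 : ∀ i ∈ A, min (y i - u i) 0 = y i - u i :=
      fun i hi => min_eq_left (by linarith [hlA i hi])
    calc F A - ∑ i ∈ A, u i = (∑ i ∈ A, y i) - ∑ i ∈ A, u i := by rw [htA]
      _ = ∑ i ∈ A, (y i - u i) := (Finset.sum_sub_distrib _ _).symm
      _ = ∑ i ∈ A, min (y i - u i) 0 := (Finset.sum_congr rfl h2).symm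
      _ = ∑ i, min (y i - u i) 0 := h1
  apply le_antisymm
  · calc m ≤ F A - ∑ i ∈ A, u i :=
        Finset.inf'_le _ (Finset.mem_powerset.2 (Finset.subset_univ A))
      _ = ∑ i, min (y i - u i) 0 := hval
      _ ≤ sSup X := le_csSup hbdd ⟨y, hyB, rfl⟩
  · exact csSup_le hXne hweak
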